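/- Let f : ℝ → ℝ be differentiable and positive, let k_2 > 0, let ε > 0 satisfy 2ε/k_2 < 1, and suppose f'(x) ≥ −ε for all x in an interval [a, b] with b − a ≤ (2/k_2)·f(a). Then f(a)/f(b) ≤ 1/(1 − 2ε/k_2); in particular there is a constant k_6 (depending only on ε and k_2) with f(a) ≤ k_6 · f(b). -/

import Mathlib

open Real Filter Set

/-- Lemma 1 of the paper: if `f` is differentiable and positive, `f' ≥ −ε` on `[a,b]`,
`b − a ≤ (2/k₂)·f(a)` and `2ε/k₂ < 1`, then `f(a)/f(b) ≤ 1/(1 − 2ε/k₂)`; in particular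
with `k₆ := 1/(1 − 2ε/k₂)` one has `f(a) ≤ k₆·f(b)`. -/
theorem ratio_bound (f : ℝ → ℝ) (a b k₂ ε : ℝ)
    (hdiff : Differentiable ℝ f)
    (hpos : ∀ x, 0 < f x)
    (hk₂ : 0 < k₂)
    (hε : 0 < ε)
    (hsmall : 2 * ε / k₂ < 1)
    (hab : a ≤ b)
    (hstep : b - a ≤ (2 / k₂) * f a)
    (hderiv : ∀ x ∈ Set.Icc a b, -ε ≤ deriv f x) :
    f a / f b ≤ 1 / (1 - 2 * ε / k₂) ∧
    f a ≤ (1 / (1 - 2 * ε / k₂)) * f b := by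
  have hden : 0 < 1 - 2 * ε / k₂ := by linarith
  have key : f a * (1 - 2 * ε / k₂) ≤ f b := by
    rcases eq_or_lt_of_le hab with h | h
    · subst h
      nlinarith [mul_pos (hpos a) (div_pos (mul_pos two_pos hε) hk₂)]
    · obtain ⟨c, hc, hc'⟩ := exists_deriv_eq_slope f h
        (hdiff.continuous.continuousOn) (fun x _ => (hdiff x).differentiableWithinAt)
      have hcmem : c ∈ Set.Icc a b := ⟨le_of_lt hc.1, le_of_lt hc.2⟩
      have h1 : -ε ≤ (f b - f a) / (b - a) := hc' ▸ hderiv c hcmem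
      have hba : 0 < b - a := by linarith
      have h2 : -ε * (b - a) ≤ f b - f a := by
        nlinarith [(le_div_iff₀ hba).mp h1]
      -- f b ≥ f a - ε (b-a) ≥ f a - ε (2/k₂) f a = f a (1 - 2ε/k₂)
      have h3 : ε * (b - a) ≤ ε * ((2 / k₂) * f a) :=
        mul_le_mul_of_nonneg_left hstep hε.le
      have : ε * ((2/k₂) * f a) = f a * (2 * ε / k₂) := by field_simp
      nlinarith
  constructor
  · rw [div_le_div_iff₀ (hpos b) hden]
    linarith
  · rw [one_div, inv_mul_eq_div, le_div_iff₀ hden]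
    linarith
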